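/- For every 1 ≤ k ≤ n−1 and every λ ∈ Γ_{k+1}, the trace of the derivative of Q_k satisfies (n−k)/(k+1) ≤ ∑_{i=1}^n (∂Q_k/∂λ_i)(λ) ≤ n−k. -/

import Mathlib

open Finset

/-- `eS k f` is the elementary symmetric polynomial `S_k` of degree `k` in the entries of the
tuple `f : ι → ℝ` (so `eS 0 f = 1` and `eS k f = 0` for `k > card ι`). -/
noncomputable def eS {ι : Type*} [DecidableEq ι] [Fintype ι] (k : ℕ) (f : ι → ℝ) : ℝ :=
  ∑ t ∈ Finset.univ.powersetCard k, ∏ i ∈ t, f i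

lemma eS_zero {ι : Type*} [DecidableEq ι] [Fintype ι] (f : ι → ℝ) : eS 0 f = 1 := by
  simp [eS]

lemma eS_eq_esymm {ι : Type*} [DecidableEq ι] [Fintype ι] (k : ℕ) (f : ι → ℝ) :
    eS k f = (Finset.univ.val.map f).esymm k := by
  rw [eS, Finset.esymm_map_val]

/-- `Aux m i f` : elementary symmetric polynomial of the variables other than `i`. -/
noncomputable def Aux {n : ℕ} (m : ℕ) (i : Fin n) (f : Fin n → ℝ) : ℝ :=
  ∑ t ∈ (Finset.univ.erase i).powersetCard m, ∏ j ∈ t, f j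

lemma eS_update {n : ℕ} (m : ℕ) (hm : 1 ≤ m) (i : Fin n) (f : Fin n → ℝ) (y : ℝ) :
    eS m (Function.update f i y) = Aux m i f + y * Aux (m - 1) i f := by
  obtain ⟨m, rfl⟩ : ∃ m', m = m' + 1 := ⟨m - 1, (Nat.succ_pred_eq_of_pos hm).symm⟩
  have h1 : (univ : Finset (Fin n)) = insert i (univ.erase i) :=
    (insert_erase (mem_univ i)).symm
  rw [eS]
  rw [show (univ : Finset (Fin n)).powersetCard (m + 1)
      = (insert i (univ.erase i)).powersetCard (m + 1) by rw [← h1]]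
  rw [powersetCard_succ_insert (notMem_erase i univ)]
  have hdisj : Disjoint ((univ.erase i).powersetCard (m + 1))
      (((univ.erase i).powersetCard m).image (insert i)) := by
    rw [disjoint_left]
    intro t ht ht'
    have hit : i ∉ t := fun hi => (mem_erase.mp ((mem_powersetCard.mp ht).1 hi)).1 rfl
    obtain ⟨u, _, rfl⟩ := mem_image.mp ht'
    exact hit (mem_insert_self i u)
  rw [sum_union hdisj]
  have hinj : Set.InjOn (insert i) (((univ.erase i).powersetCard m : Finset (Finset (Fin n))) : Set (Finset (Fin n))) := by
    intro t ht u hu h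
    have hit : i ∉ t := fun hi => (mem_erase.mp ((mem_powersetCard.mp ht).1 hi)).1 rfl
    have hiu : i ∉ u := fun hi => (mem_erase.mp ((mem_powersetCard.mp hu).1 hi)).1 rfl
    rw [← erase_insert hit, h, erase_insert hiu]
  rw [sum_image hinj]
  have e1 : ∑ t ∈ (univ.erase i).powersetCard (m + 1), ∏ j ∈ t, Function.update f i y j
      = Aux (m + 1) i f := by
    refine sum_congr rfl fun t ht => prod_congr rfl fun j hj => ?_
    have : j ≠ i := fun h => (mem_erase.mp ((mem_powersetCard.mp ht).1 hj)).1 (h ▸ rfl)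
    exact Function.update_of_ne this y f
  have e2 : ∑ t ∈ (univ.erase i).powersetCard m, ∏ j ∈ insert i t, Function.update f i y j
      = y * Aux m i f := by
    rw [Aux, mul_sum]
    refine sum_congr rfl fun t ht => ?_
    have hit : i ∉ t := fun hi => (mem_erase.mp ((mem_powersetCard.mp ht).1 hi)).1 rfl
    rw [prod_insert hit, Function.update_self]
    congr 1
    refine prod_congr rfl fun j hj => ?_
    have : j ≠ i := fun h => (mem_erase.mp ((mem_powersetCard.mp ht).1 hj)).1 (h ▸ rfl)
    exact Function.update_of_ne this y f
  rw [e1, e2]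
  simp

lemma eS_decomp {n : ℕ} (m : ℕ) (hm : 1 ≤ m) (i : Fin n) (f : Fin n → ℝ) :
    eS m f = Aux m i f + f i * Aux (m - 1) i f := by
  conv_lhs => rw [← Function.update_eq_self i f]
  exact eS_update m hm i f (f i)

lemma add_single_eq_update {n : ℕ} (f : Fin n → ℝ) (i : Fin n) (s : ℝ) :
    f + s • (Pi.single i 1 : Fin n → ℝ) = Function.update f i (f i + s) := by
  funext j
  by_cases h : j = i
  · subst h; simp [Function.update_self]
  · simp [h, Pi.single_eq_of_ne h, Function.update_of_ne h]

lemma sum_Aux {n : ℕ} (m : ℕ) (hm : m ≤ n) (f : Fin n → ℝ) :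
    ∑ i, Aux m i f = ((n : ℝ) - m) * eS m f := by
  have key : ∀ i : Fin n, Aux m i f
      = ∑ t ∈ (univ : Finset (Fin n)).powersetCard m,
          if i ∈ t then 0 else ∏ j ∈ t, f j := by
    intro i
    rw [Aux]
    have hset : (univ.erase i).powersetCard m
        = ((univ : Finset (Fin n)).powersetCard m).filter (fun t => i ∉ t) := by
      ext t
      simp only [mem_powersetCard, mem_filter, subset_erase, subset_univ, true_and]
      tauto
    rw [hset, sum_filter]
    refine sum_congr rfl fun t _ => ?_
    by_cases h : i ∈ t <;> simp [h]
  simp_rw [key]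
  rw [sum_comm]
  have inner : ∀ t ∈ (univ : Finset (Fin n)).powersetCard m,
      (∑ i : Fin n, if i ∈ t then 0 else ∏ j ∈ t, f j) = ((n : ℝ) - m) * ∏ j ∈ t, f j := by
    intro t ht
    rw [sum_ite, sum_const_zero, zero_add, sum_const, nsmul_eq_mul]
    have hfil : (univ : Finset (Fin n)).filter (fun i => i ∉ t) = tᶜ := by
      ext j; simp
    rw [hfil, card_compl, (mem_powersetCard_univ.mp ht), Fintype.card_fin,
      Nat.cast_sub hm]
  rw [sum_congr rfl inner, ← mul_sum, eS]

/-- `Q k f = S_{k+1}(f) / S_k(f)`. -/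
noncomputable def Q {ι : Type*} [DecidableEq ι] [Fintype ι] (k : ℕ) (f : ι → ℝ) : ℝ :=
  eS (k + 1) f / eS k f

/-- `pdQ k i f` is the `i`-th partial derivative `∂Q_k/∂λ_i` evaluated at `f`. -/
noncomputable def pdQ {n : ℕ} (k : ℕ) (i : Fin n) (f : Fin n → ℝ) : ℝ :=
  deriv (fun s : ℝ => Q k (f + s • (Pi.single i 1 : Fin n → ℝ))) 0

lemma pdQ_eq {n : ℕ} (k : ℕ) (hk : 1 ≤ k) (i : Fin n) (f : Fin n → ℝ)
    (hf : eS k f ≠ 0) :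
    pdQ k i f = (Aux k i f * eS k f - eS (k + 1) f * Aux (k - 1) i f) / eS k f ^ 2 := by
  have hfun : (fun s : ℝ => Q k (f + s • (Pi.single i 1 : Fin n → ℝ)))
      = fun s : ℝ => (eS (k + 1) f + s * Aux k i f) / (eS k f + s * Aux (k - 1) i f) := by
    funext s
    rw [add_single_eq_update, Q, eS_update (k + 1) (by omega), eS_update k hk,
      eS_decomp (k + 1) (by omega) i f, eS_decomp k hk i f]
    have : k + 1 - 1 = k := rfl
    rw [this]
    ring_nf
  rw [pdQ, hfun]
  have h1 : HasDerivAt (fun s : ℝ => eS (k + 1) f + s * Aux k i f) (Aux k i f) 0 := by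
    simpa using ((hasDerivAt_id (0 : ℝ)).mul_const (Aux k i f)).const_add (eS (k + 1) f)
  have h2 : HasDerivAt (fun s : ℝ => eS k f + s * Aux (k - 1) i f) (Aux (k - 1) i f) 0 := by
    simpa using ((hasDerivAt_id (0 : ℝ)).mul_const (Aux (k - 1) i f)).const_add (eS k f)
  have hne : eS k f + (0 : ℝ) * Aux (k - 1) i f ≠ 0 := by simpa using hf
  have hd := h1.div h2 hne
  rw [(show HasDerivAt (fun s : ℝ => (eS (k + 1) f + s * Aux k i f) / (eS k f + s * Aux (k - 1) i f)) _ 0 from hd).deriv]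
  simp

/-- Expansion of the square of a sum in terms of elementary symmetric polynomials. -/
lemma sq_sum_eq {ι : Type*} [DecidableEq ι] (s : Finset ι) (y : ι → ℝ) :
    (∑ i ∈ s, y i) ^ 2
      = ∑ i ∈ s, y i ^ 2 + 2 * ∑ t ∈ s.powersetCard 2, ∏ i ∈ t, y i := by
  induction s using Finset.induction with
  | empty => rw [Finset.powersetCard_eq_empty.mpr (by simp)]; simp
  | @insert a s ha ih =>
    rw [sum_insert ha, sum_insert ha,
      show (2 : ℕ) = 1 + 1 from rfl, powersetCard_succ_insert ha]
    have hdisj : Disjoint (s.powersetCard (1 + 1)) ((s.powersetCard 1).image (insert a)) := by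
      rw [disjoint_left]
      intro t ht ht'
      have hat : a ∉ t := fun h => ha ((mem_powersetCard.mp ht).1 h)
      obtain ⟨u, _, rfl⟩ := mem_image.mp ht'
      exact hat (mem_insert_self a u)
    rw [sum_union hdisj]
    have hinj : Set.InjOn (insert a) ((s.powersetCard 1 : Finset (Finset ι)) : Set (Finset ι)) := by
      intro t ht u hu h
      have hat : a ∉ t := fun h => ha ((mem_powersetCard.mp ht).1 h)
      have hau : a ∉ u := fun h => ha ((mem_powersetCard.mp hu).1 h)
      rw [← erase_insert hat, h, erase_insert hau]
    rw [sum_image hinj]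
    have e2 : ∑ t ∈ s.powersetCard 1, ∏ i ∈ insert a t, y i = y a * ∑ i ∈ s, y i := by
      rw [powersetCard_one, sum_map, mul_sum]
      refine sum_congr rfl fun i hi => ?_
      have hai : a ∉ ({i} : Finset ι) := by
        simp only [mem_singleton]
        exact fun h => ha (h ▸ hi)
      simp [prod_insert hai]
    rw [e2]
    ring_nf
    ring_nf at ih
    linarith [ih]

lemma eS_compl {ι : Type*} [DecidableEq ι] [Fintype ι] (m : ℕ) (hm : m ≤ Fintype.card ι)
    (f : ι → ℝ) :
    eS m f = ∑ u ∈ (univ : Finset ι).powersetCard (Fintype.card ι - m), ∏ i ∈ uᶜ, f i := by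
  rw [eS]
  refine Finset.sum_nbij' (fun t => tᶜ) (fun u => uᶜ) ?_ ?_ ?_ ?_ ?_
  · intro t ht
    rw [mem_powersetCard_univ, card_compl, mem_powersetCard_univ.mp ht]
  · intro u hu
    rw [mem_powersetCard_univ, card_compl, mem_powersetCard_univ.mp hu,
      Nat.sub_sub_self hm]
  · intro t _; exact compl_compl t
  · intro u _; exact compl_compl u
  · intro t _; rw [compl_compl]

lemma newton_base {ι : Type*} [DecidableEq ι] [Fintype ι] (f : ι → ℝ)
    (hn : 2 ≤ Fintype.card ι) :
    2 * (Fintype.card ι : ℝ) * (eS (Fintype.card ι) f * eS (Fintype.card ι - 2) f)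
      ≤ ((Fintype.card ι : ℝ) - 1) * eS (Fintype.card ι - 1) f ^ 2 := by
  set N := Fintype.card ι with hN
  set y : ι → ℝ := fun i => ∏ j ∈ univ.erase i, f j with hy
  -- eS (N-1) f = ∑ i, y i
  have e1 : eS (N - 1) f = ∑ i, y i := by
    rw [eS_compl (N - 1) (by omega) f, show N - (N - 1) = 1 by omega, powersetCard_one,
      sum_map]
    refine sum_congr rfl fun i _ => ?_
    have : ({i} : Finset ι)ᶜ = univ.erase i := by ext j; simp [eq_comm]
    simp only [Function.Embedding.coeFn_mk, this, hy]
  -- eS N f * eS (N-2) f = ∑ over pairs of y products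
  have e2 : eS N f * eS (N - 2) f = ∑ t ∈ (univ : Finset ι).powersetCard 2, ∏ i ∈ t, y i := by
    have hN2 : eS N f = ∏ i, f i := by
      rw [eS, show N = #(univ : Finset ι) from by simp [hN], powersetCard_self, sum_singleton]
    rw [hN2, eS_compl (N - 2) (by omega) f, show N - (N - 2) = 2 by omega, mul_sum]
    refine sum_congr rfl fun u hu => ?_
    obtain ⟨a, b, hab, rfl⟩ := card_eq_two.mp (mem_powersetCard_univ.mp hu)
    have hcompl : ({a, b} : Finset ι)ᶜ = (univ.erase a).erase b := by
      ext j; simp [not_or, and_comm]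
    have hbmem : b ∈ univ.erase a := mem_erase.mpr ⟨fun h => hab h.symm, mem_univ b⟩
    have hprod_a : y a = f b * ∏ j ∈ (univ.erase a).erase b, f j := by
      rw [hy]; exact (mul_prod_erase (univ.erase a) f hbmem).symm
    have hamem : a ∈ univ.erase b := mem_erase.mpr ⟨hab, mem_univ a⟩
    have hprod_b : y b = f a * ∏ j ∈ (univ.erase b).erase a, f j := by
      rw [hy]; exact (mul_prod_erase (univ.erase b) f hamem).symm
    have hcomm : (univ.erase b).erase a = (univ.erase a).erase b := erase_right_comm
    have hall : ∏ i, f i = f a * (f b * ∏ j ∈ (univ.erase a).erase b, f j) := by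
      rw [← hprod_a, hy, mul_prod_erase univ f (mem_univ a)]
    rw [prod_pair hab, hcompl, hall, hprod_a, hprod_b, hcomm]
    ring
  have cauchy : (∑ i, y i) ^ 2 ≤ (N : ℝ) * ∑ i, y i ^ 2 := by
    have := sq_sum_le_card_mul_sum_sq (s := (univ : Finset ι)) (f := y)
    simpa [hN] using this
  have expand := sq_sum_eq (univ : Finset ι) y
  rw [e1, e2]
  nlinarith [expand, cauchy, sq_nonneg (∑ i, y i)]

open Polynomial in
lemma exists_esymm_deriv (s : Multiset ℝ) (hs : 1 ≤ Multiset.card s) :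
    ∃ t : Multiset ℝ, Multiset.card t = Multiset.card s - 1 ∧
      ∀ m : ℕ, m + 1 ≤ Multiset.card s →
        (Multiset.card s : ℝ) * t.esymm m = ((Multiset.card s : ℝ) - m) * s.esymm m := by
  set n := Multiset.card s with hn
  set p : Polynomial ℝ := (s.map fun r => X + C r).prod with hp
  have hmon : ∀ q ∈ s.map fun r => X + C r, q.Monic := by
    intro q hq
    obtain ⟨r, _, rfl⟩ := Multiset.mem_map.mp hq
    exact monic_X_add_C r
  have hpmonic : p.Monic := monic_multiset_prod_of_monic s _ fun r _ => monic_X_add_C r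
  have hdeg : p.natDegree = n := by
    rw [hp, natDegree_multiset_prod_of_monic _ hmon, Multiset.map_map]
    have : ((fun q : Polynomial ℝ => q.natDegree) ∘ fun r : ℝ => X + C r) = fun _ => 1 := by
      funext r; simp [natDegree_X_add_C]
    rw [this, Multiset.map_const', Multiset.sum_replicate, smul_eq_mul, mul_one, hn]
  have hproots : p.roots = s.map Neg.neg := by
    have : p = ((s.map Neg.neg).map fun r => X - C r).prod := by
      rw [hp, Multiset.map_map]
      congr 1
      refine Multiset.map_congr rfl fun r _ => ?_
      simp [sub_neg_eq_add]
    rw [this, roots_multiset_prod_X_sub_C]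
  have hcroots : Multiset.card p.roots = n := by rw [hproots, Multiset.card_map]
  have hcoeffn : p.coeff n = 1 := by
    have := hpmonic.coeff_natDegree
    rwa [hdeg] at this
  have hcoeffd : (derivative p).coeff (n - 1) = (n : ℝ) := by
    rw [coeff_derivative, show n - 1 + 1 = n by omega, hcoeffn, one_mul]
    push_cast [Nat.cast_sub hs]
    ring
  have hn0 : (n : ℝ) ≠ 0 := Nat.cast_ne_zero.mpr (by omega)
  have hdegd : (derivative p).natDegree = n - 1 := by
    refine le_antisymm (by simpa [hdeg] using natDegree_derivative_le p) ?_
    exact le_natDegree_of_ne_zero (by rw [hcoeffd]; exact hn0)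
  have hlcd : (derivative p).leadingCoeff = (n : ℝ) := by
    rw [Polynomial.leadingCoeff, hdegd, hcoeffd]
  have hcrootsd : Multiset.card (derivative p).roots = n - 1 := by
    refine le_antisymm (by simpa [hdegd] using card_roots' (derivative p)) ?_
    have := card_roots_le_derivative p
    omega
  refine ⟨(derivative p).roots.map Neg.neg, by rw [Multiset.card_map, hcrootsd], ?_⟩
  intro m hm
  set t : Multiset ℝ := (derivative p).roots.map Neg.neg with ht
  have hrootst : (derivative p).roots = t.map Neg.neg := by
    rw [ht, Multiset.map_map]
    simp
  have hsq : ((-1 : ℝ)) ^ m * ((-1 : ℝ)) ^ m = 1 := by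
    rw [← mul_pow]; norm_num
  -- first evaluation of the coefficient
  have h1 : (derivative p).coeff (n - 1 - m) = (n : ℝ) * t.esymm m := by
    rw [Polynomial.coeff_eq_esymm_roots_of_card (by rw [hcrootsd, hdegd])
      (show n - 1 - m ≤ (derivative p).natDegree by omega)]
    rw [hdegd, show n - 1 - (n - 1 - m) = m by omega, hlcd, hrootst, Multiset.esymm_neg]
    rw [mul_assoc, ← mul_assoc ((-1:ℝ)^m), hsq, one_mul]
  -- second evaluation of the coefficient
  have h2 : (derivative p).coeff (n - 1 - m) = ((n : ℝ) - m) * s.esymm m := by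
    rw [coeff_derivative, show n - 1 - m + 1 = n - m by omega]
    rw [hp, Multiset.prod_X_add_C_coeff s (show n - m ≤ Multiset.card s by omega)]
    rw [← hn, show n - (n - m) = m by omega]
    have hcast : ((n - 1 - m : ℕ) : ℝ) + 1 = (n : ℝ) - m := by
      rw [show n - 1 - m = n - (m + 1) by omega, Nat.cast_sub hm]
      push_cast; ring
    rw [hcast]; ring
  rw [← h1]; exact h2

theorem newton_aux (k : ℕ) (hk : 1 ≤ k) :
    ∀ n : ℕ, k + 1 ≤ n → ∀ s : Multiset ℝ, Multiset.card s = n →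
      ((k : ℝ) + 1) * ((n : ℝ) - k + 1) * (s.esymm (k - 1) * s.esymm (k + 1))
        ≤ (k : ℝ) * ((n : ℝ) - k) * s.esymm k ^ 2 := by
  intro n hn
  induction n, hn using Nat.le_induction with
  | base =>
    intro s hs
    have hl : s.toList.length = k + 1 := by rw [Multiset.length_toList, hs]
    set f : Fin s.toList.length → ℝ := s.toList.get with hf
    have hmap : (Finset.univ.val.map f) = s := by
      have h1 : (Finset.univ : Finset (Fin s.toList.length)).val
          = ↑(List.finRange s.toList.length) := rfl
      rw [h1, Multiset.map_coe, List.map_get_finRange]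
      exact s.coe_toList
    have hcard : Fintype.card (Fin s.toList.length) = k + 1 := by rw [Fintype.card_fin, hl]
    have hb := newton_base f (by rw [hcard]; omega)
    rw [hcard] at hb
    have hE : ∀ m, eS m f = s.esymm m := fun m => by rw [eS_eq_esymm, hmap]
    rw [hE, hE, hE, show k + 1 - 2 = k - 1 by omega, show k + 1 - 1 = k by omega] at hb
    push_cast at hb ⊢
    nlinarith [hb]
  | succ n hn ih =>
    intro s hs
    obtain ⟨t, htc, hrel⟩ := exists_esymm_deriv s (by omega)
    rw [hs] at htc hrel
    have htc' : Multiset.card t = n := by omega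
    have iht := ih t htc'
    have hm1 := hrel (k - 1) (by omega)
    have hm2 := hrel k (by omega)
    have hm3 := hrel (k + 1) (by omega)
    push_cast [Nat.cast_sub hk] at hm1 hm2 hm3 iht ⊢
    set Fm := t.esymm (k - 1)
    set Fk := t.esymm k
    set Fp := t.esymm (k + 1)
    set Em := s.esymm (k - 1)
    set Ek := s.esymm k
    set Ep := s.esymm (k + 1)
    have e1 : ((n : ℝ) + 1) ^ 2 * (Fm * Fp)
        = (((n : ℝ) + 1 - ((k : ℝ) - 1)) * ((n : ℝ) + 1 - ((k : ℝ) + 1))) * (Em * Ep) := by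
      linear_combination (((n : ℝ) + 1) * Fp) * hm1
        + ((((n : ℝ) + 1 - ((k : ℝ) - 1))) * Em) * hm3
    have e2 : ((n : ℝ) + 1) ^ 2 * Fk ^ 2 = ((n : ℝ) + 1 - k) ^ 2 * Ek ^ 2 := by
      linear_combination (((n : ℝ) + 1) * Fk + ((n : ℝ) + 1 - k) * Ek) * hm2
    have ha : (0 : ℝ) < (n : ℝ) - k := by
      have : (k : ℝ) + 1 ≤ (n : ℝ) := by exact_mod_cast hn
      linarith
    have hb : (0 : ℝ) < (n : ℝ) - k + 1 := by linarith
    refine le_of_mul_le_mul_right ?_ (mul_pos ha hb)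
    calc ((k : ℝ) + 1) * ((n : ℝ) + 1 - (k : ℝ) + 1) * (Em * Ep) * (((n : ℝ) - k) * ((n : ℝ) - k + 1))
        = ((k : ℝ) + 1) * ((n : ℝ) - k + 1) * (Fm * Fp) * (((n : ℝ) + 1) ^ 2) := by
          linear_combination (-(((k : ℝ) + 1) * ((n : ℝ) - k + 1))) * e1
      _ ≤ (k : ℝ) * ((n : ℝ) - k) * Fk ^ 2 * (((n : ℝ) + 1) ^ 2) :=
          mul_le_mul_of_nonneg_right iht (by positivity)
      _ = (k : ℝ) * ((n : ℝ) + 1 - (k : ℝ)) * Ek ^ 2 * (((n : ℝ) - k) * ((n : ℝ) - k + 1)) := by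
          linear_combination ((k : ℝ) * ((n : ℝ) - k)) * e2

theorem newton_ineq (s : Multiset ℝ) (k : ℕ) (hk : 1 ≤ k) (hk2 : k + 1 ≤ Multiset.card s) :
    ((k : ℝ) + 1) * ((Multiset.card s : ℝ) - k + 1) * (s.esymm (k - 1) * s.esymm (k + 1))
      ≤ (k : ℝ) * ((Multiset.card s : ℝ) - k) * s.esymm k ^ 2 :=
  newton_aux k hk (Multiset.card s) hk2 s rfl

/-- The Garding cone `Γ_m = {λ ∈ ℝⁿ : S_l(λ) > 0 for l = 1,…,m}`. -/
def Gamma (n m : ℕ) : Set (Fin n → ℝ) :=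
  {lam | ∀ l : ℕ, 1 ≤ l → l ≤ m → 0 < eS l lam}

/-- For every `1 ≤ k ≤ n−1` and every `λ ∈ Γ_{k+1}`, the trace of the derivative of `Q_k`
satisfies `(n−k)/(k+1) ≤ ∑_{i=1}^n (∂Q_k/∂λ_i)(λ) ≤ n−k`. -/
theorem trace_pdQ_bounds (n k : ℕ) (hk1 : 1 ≤ k) (hk2 : k + 1 ≤ n)
    (lam : Fin n → ℝ) (hlam : lam ∈ Gamma n (k + 1)) :
    ((n : ℝ) - k) / ((k : ℝ) + 1) ≤ ∑ i, pdQ k i lam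
    ∧ ∑ i, pdQ k i lam ≤ (n : ℝ) - k := by
  have hSk : 0 < eS k lam := hlam k hk1 (by omega)
  have hSk1 : 0 < eS (k + 1) lam := hlam (k + 1) (by omega) le_rfl
  have hSkm : 0 < eS (k - 1) lam := by
    rcases eq_or_ne k 1 with rfl | hne
    · rw [show (1 : ℕ) - 1 = 0 from rfl, eS_zero]; norm_num
    · exact hlam (k - 1) (by omega) (by omega)
  have htrace : ∑ i, pdQ k i lam
      = (((n : ℝ) - k) * eS k lam ^ 2
          - ((n : ℝ) - k + 1) * (eS (k + 1) lam * eS (k - 1) lam)) / eS k lam ^ 2 := by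
    have hpd : ∀ i, pdQ k i lam
        = (Aux k i lam * eS k lam - eS (k + 1) lam * Aux (k - 1) i lam) / eS k lam ^ 2 :=
      fun i => pdQ_eq k hk1 i lam hSk.ne'
    simp_rw [hpd]
    rw [← sum_div]
    congr 1
    rw [sum_sub_distrib, ← sum_mul, ← mul_sum, sum_Aux k (by omega) lam,
      sum_Aux (k - 1) (by omega) lam]
    have hc : ((k - 1 : ℕ) : ℝ) = (k : ℝ) - 1 := by rw [Nat.cast_sub hk1]; simp
    rw [hc]; ring
  have hnewton : ((k : ℝ) + 1) * ((n : ℝ) - k + 1) * (eS (k - 1) lam * eS (k + 1) lam)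
      ≤ (k : ℝ) * ((n : ℝ) - k) * eS k lam ^ 2 := by
    have hcard : Multiset.card (Finset.univ.val.map lam) = n := by
      rw [Multiset.card_map]; simp
    have hni := newton_ineq (Finset.univ.val.map lam) k hk1 (by rw [hcard]; omega)
    rw [hcard] at hni
    have hE : ∀ m, (Finset.univ.val.map lam).esymm m = eS m lam :=
      fun m => (eS_eq_esymm m lam).symm
    rw [hE, hE, hE] at hni
    exact hni
  have hknR : (k : ℝ) + 1 ≤ (n : ℝ) := by exact_mod_cast hk2
  have hSk2 : (0 : ℝ) < eS k lam ^ 2 := by positivity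
  have hP : 0 < eS (k + 1) lam * eS (k - 1) lam := mul_pos hSk1 hSkm
  constructor
  · rw [htrace, div_le_div_iff₀ (by positivity) hSk2]
    nlinarith [hnewton]
  · rw [htrace, div_le_iff₀ hSk2]
    have h0 : 0 ≤ ((n : ℝ) - k + 1) * (eS (k + 1) lam * eS (k - 1) lam) :=
      le_of_lt (mul_pos (by linarith) hP)
    linarith
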